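/- Let Δ be a finite set of linear functionals (simple roots) on a real vector space 𝔞 with dual basis relations as follows: Δ = Δ^Q ⊔ Δ', and for each δ ∈ Δ' the restriction of δ to the span of the coroots of Δ^Q is a nonpositive linear combination of the elements of Δ^Q. Fix s ≥ 1 and c in the cone {b : b^α > s for all α ∈ Δ^Q} (multiplicative coordinates b^α = exp⟨α, log b⟩). Set m_c = max_{α∈Δ^Q} c^α / s > 1. Then for any a in the shifted cone A(m_c s) = {a : a^α > m_c s for all α ∈ Δ} and any b with c^α ≤ b^α ≤ (a^Q)^α for all α ∈ Δ^Q (where a = a_Q a^Q is the decomposition along the splitting determined by Δ^Q), the point a_Q b lies in A(s) = {x : x^α > s for all α ∈ Δ}. -/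
import Mathlib


/-- Lemma 9.2 (lemHomotopyFormulaNeighborhoods): with `Δ` simple roots,
`Q ⊆ Δ`, the splitting `a = a_Q a^Q` given by a projection `p` onto the span
of the coroots of `Q` (so that roots in `Q` vanish on the `A_Q`-factor, and
each `δ ∈ Δ \ Q` restricts to `A^Q` as a nonpositive combination of `Q`),
`s ≥ 1`, `c` in the `A^Q`-factor with `c^α > s` for `α ∈ Q`, and
`m = max_{α ∈ Q} c^α / s`, one has `m > 1` and: for every `a` with
`a^δ > m·s` for all `δ ∈ Δ` and every `b` in the `A^Q`-factor with
`c^α ≤ b^α ≤ (a^Q)^α` for all `α ∈ Q`, the point `a_Q b` lies in the cone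
`{x : x^δ > s for all δ ∈ Δ}`.  (Multiplicative coordinates
`a^λ = exp⟨λ, log a⟩`.) -/
theorem stmt2 {V : Type*} [AddCommGroup V] [Module ℝ V]
    (Δ Q : Finset (V →ₗ[ℝ] ℝ)) (hQ : Q ⊆ Δ) (hQne : Q.Nonempty)
    (p : V →ₗ[ℝ] V)
    (hvanish : ∀ α ∈ Q, ∀ v : V, α (v - p v) = 0)
    (coeff : (V →ₗ[ℝ] ℝ) → (V →ₗ[ℝ] ℝ) → ℝ)
    (hcoeff_nonpos : ∀ δ ∈ Δ, δ ∉ Q → ∀ α ∈ Q, coeff δ α ≤ 0)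
    (hdecomp : ∀ δ ∈ Δ, δ ∉ Q → ∀ v : V, δ (p v) = ∑ α ∈ Q, coeff δ α * α v)
    (s : ℝ) (hs : 1 ≤ s)
    (c : V) (hc : p c = c) (hcs : ∀ α ∈ Q, s < Real.exp (α c))
    (m : ℝ) (hm : m = Q.sup' hQne (fun α => Real.exp (α c)) / s) :
    1 < m ∧
      ∀ a : V, (∀ δ ∈ Δ, m * s < Real.exp (δ a)) →
      ∀ b : V, p b = b → (∀ α ∈ Q, α c ≤ α b ∧ α b ≤ α (p a)) →
      ∀ δ ∈ Δ, s < Real.exp (δ ((a - p a) + b)) := by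
  have hs0 : (0:ℝ) < s := lt_of_lt_of_le zero_lt_one hs
  have hm1 : 1 < m := by
    rw [hm, lt_div_iff₀ hs0, one_mul]
    rw [Finset.lt_sup'_iff]
    obtain ⟨α, hα⟩ := hQne
    exact ⟨α, hα, hcs α hα⟩
  refine ⟨hm1, ?_⟩
  intro a ha b hpb hb δ hδ
  by_cases hδQ : δ ∈ Q
  · have h0 : δ (a - p a) = 0 := hvanish δ hδQ a
    rw [map_add, h0, zero_add]
    exact lt_of_lt_of_le (hcs δ hδQ) (Real.exp_le_exp.mpr (hb δ hδQ).1)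
  · have h1 : δ (p a) = ∑ α ∈ Q, coeff δ α * α a := hdecomp δ hδ hδQ a
    have h2 : δ b = ∑ α ∈ Q, coeff δ α * α b := by
      rw [show δ b = δ (p b) by rw [hpb]]
      exact hdecomp δ hδ hδQ b
    have hsum : ∑ α ∈ Q, coeff δ α * α a ≤ ∑ α ∈ Q, coeff δ α * α b := by
      refine Finset.sum_le_sum fun α hα => ?_
      have hba : α b ≤ α a := by
        have := hvanish α hα a
        have h3 := (hb α hα).2
        rw [map_sub] at this
        linarith
      exact mul_le_mul_of_nonpos_left hba (hcoeff_nonpos δ hδ hδQ α hα)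
    have hle : δ a ≤ δ ((a - p a) + b) := by
      rw [map_add, map_sub, h1, h2]; linarith
    have := lt_of_lt_of_le (ha δ hδ) (Real.exp_le_exp.mpr hle)
    nlinarith
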